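/- Let w_{ij} (1 ≤ i < j ≤ n) be real numbers, not all zero, and let ξ₁,…,ξₙ be i.i.d. Rademacher random variables (taking values ±1 with probability 1/2 each). Then Prob{ Σ_{i<j} w_{ij} ξᵢ ξⱼ ≤ 0 } > 1/87. -/

import Mathlib

open Finset

namespace Stmt9

variable {n : ℕ}

def r (b : Bool) : ℝ := if b then 1 else -1

@[simp] lemma r_sq (b : Bool) : r b ^ 2 = 1 := by cases b <;> simp [r]

def chi (D : Finset (Fin n)) (s : Fin n → Bool) : ℝ := ∏ i ∈ D, r (s i)

lemma chi_mul (D E : Finset (Fin n)) (s : Fin n → Bool) :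
    chi D s * chi E s = chi (symmDiff D E) s := by
  have h1 : (∏ i ∈ D ∪ E, r (s i)) * ∏ i ∈ D ∩ E, r (s i)
      = (∏ i ∈ D, r (s i)) * ∏ i ∈ E, r (s i) := Finset.prod_union_inter
  have h2 : D ∪ E = symmDiff D E ∪ (D ∩ E) := (symmDiff_sup_inf D E).symm
  have h3 : (∏ i ∈ D ∪ E, r (s i))
      = (∏ i ∈ symmDiff D E, r (s i)) * ∏ i ∈ D ∩ E, r (s i) := by
    rw [h2]
    exact Finset.prod_union (disjoint_symmDiff_inf D E)
  have h4 : (∏ i ∈ D ∩ E, r (s i)) * ∏ i ∈ D ∩ E, r (s i) = 1 := by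
    rw [← Finset.prod_mul_distrib]
    refine Finset.prod_eq_one fun i _ => ?_
    rw [← sq]; exact r_sq _
  unfold chi
  rw [← h1, h3]
  rw [mul_assoc, h4, mul_one]

lemma sum_chi (D : Finset (Fin n)) :
    ∑ s : Fin n → Bool, chi D s = if D = ∅ then (2:ℝ)^n else 0 := by
  have key : ∀ s : Fin n → Bool, chi D s = ∏ i : Fin n, (if i ∈ D then r (s i) else 1) := by
    intro s
    unfold chi
    rw [Finset.prod_ite_mem, Finset.univ_inter]
  simp_rw [key]
  rw [← Fintype.piFinset_univ, ← Finset.prod_univ_sum (fun _ => (univ : Finset Bool))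
    (fun i b => if i ∈ D then r b else 1)]
  by_cases hD : D = ∅
  · simp [hD]
  · rw [if_neg hD]
    obtain ⟨i, hi⟩ := Finset.nonempty_iff_ne_empty.2 hD
    refine Finset.prod_eq_zero (Finset.mem_univ i) ?_
    simp [hi, r]
  
lemma sum_chi_mul (D E : Finset (Fin n)) :
    ∑ s : Fin n → Bool, chi D s * chi E s = if D = E then (2:ℝ)^n else 0 := by
  simp_rw [chi_mul]
  rw [sum_chi]
  congr 1
  simp [symmDiff_eq_bot]

end Stmt9

namespace Stmt9
variable {n : ℕ}

def P (n : ℕ) : Finset (Fin n × Fin n) := Finset.univ.filter fun p => p.1 < p.2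
def S (p : Fin n × Fin n) : Finset (Fin n) := {p.1, p.2}

lemma mem_P {p : Fin n × Fin n} : p ∈ P n ↔ p.1 < p.2 := by simp [P]

lemma S_inj {p q : Fin n × Fin n} (hp : p ∈ P n) (hq : q ∈ P n) (h : S p = S q) : p = q := by
  rw [mem_P] at hp hq
  have m1 : p.1 ∈ S q := h ▸ (by simp [S])
  have m2 : p.2 ∈ S q := h ▸ (by simp [S])
  simp only [S, Finset.mem_insert, Finset.mem_singleton] at m1 m2
  have m3 : q.1 ∈ S p := h ▸ (by simp [S])
  have m4 : q.2 ∈ S p := h ▸ (by simp [S])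
  simp only [S, Finset.mem_insert, Finset.mem_singleton] at m3 m4
  have e1 : p.1.val = q.1.val ∧ p.2.val = q.2.val := by
    rcases m1 with h1 | h1 <;> rcases m2 with h2 | h2 <;> rcases m3 with h3 | h3 <;>
      rcases m4 with h4 | h4 <;>
    · rw [Fin.lt_def] at hp hq
      rw [Fin.ext_iff] at *
      omega
  exact Prod.ext (Fin.ext e1.1) (Fin.ext e1.2)

lemma card_S {p : Fin n × Fin n} (hp : p ∈ P n) : (S p).card = 2 := by
  rw [mem_P] at hp
  rw [S, Finset.card_pair (Fin.ne_of_lt hp)]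

end Stmt9

namespace Stmt9
variable {n : ℕ} (w : Fin n → Fin n → ℝ)

def aa (w : Fin n → Fin n → ℝ) (p : Fin n × Fin n) : ℝ := w p.1 p.2
def F (w : Fin n → Fin n → ℝ) (s : Fin n → Bool) : ℝ := ∑ p ∈ P n, aa w p * chi (S p) s
def sig2 (w : Fin n → Fin n → ℝ) : ℝ := ∑ p ∈ P n, (aa w p)^2

lemma mom1 : ∑ s : Fin n → Bool, F w s = 0 := by
  simp_rw [F]
  rw [Finset.sum_comm]
  refine Finset.sum_eq_zero fun p hp => ?_
  rw [← Finset.mul_sum, sum_chi, if_neg, mul_zero]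
  intro h
  have : (S p).card = 2 := card_S hp
  rw [h] at this; simp at this

lemma mom2 : ∑ s : Fin n → Bool, (F w s)^2 = 2^n * sig2 w := by
  have expand : ∀ s : Fin n → Bool, (F w s)^2
      = ∑ p ∈ P n, ∑ q ∈ P n, (aa w p * aa w q) * (chi (S p) s * chi (S q) s) := by
    intro s
    rw [sq, F, Finset.sum_mul_sum]
    congr 1; ext p; congr 1; ext q; ring
  simp_rw [expand]
  rw [Finset.sum_comm]
  have : ∀ p ∈ P n, ∑ s : Fin n → Bool, ∑ q ∈ P n,
      (aa w p * aa w q) * (chi (S p) s * chi (S q) s) = 2^n * (aa w p)^2 := by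
    intro p hp
    rw [Finset.sum_comm]
    rw [Finset.sum_eq_single p]
    · rw [← Finset.mul_sum, sum_chi_mul, if_pos rfl]; ring
    · intro q hq hqp
      rw [← Finset.mul_sum, sum_chi_mul, if_neg, mul_zero]
      intro h
      exact hqp (S_inj hq hp h.symm)
    · intro h; exact absurd hp h
  rw [Finset.sum_congr rfl this, ← Finset.mul_sum, sig2]

end Stmt9

namespace Stmt9
variable {n : ℕ} (w : Fin n → Fin n → ℝ)

lemma collapse {α β : Type*} [Fintype β] [DecidableEq β] (s : Finset α) (E : α → β) (h : α → ℝ) :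
    ∑ y : β, (∑ t ∈ s, if E t = y then h t else 0)^2
      = ∑ t ∈ s, ∑ t' ∈ s, (if E t = E t' then h t * h t' else 0) := by
  have step : ∀ y : β, (∑ t ∈ s, if E t = y then h t else 0)^2
      = ∑ t ∈ s, ∑ t' ∈ s, (if E t = y then (if E t' = y then h t * h t' else 0) else 0) := by
    intro y
    rw [sq, Finset.sum_mul_sum]
    congr 1; ext t; congr 1; ext t'
    split_ifs <;> ring
  simp_rw [step]
  rw [Finset.sum_comm]
  congr 1; ext t
  rw [Finset.sum_comm]
  congr 1; ext t'
  have : ∀ y : β, (if E t = y then (if E t' = y then h t * h t' else 0) else 0)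
      = if y = E t then (if E t' = y then h t * h t' else 0) else 0 := by
    intro y; congr 1; simp [eq_comm]
  simp_rw [this]
  rw [Finset.sum_ite_eq' Finset.univ (E t) (fun y => if E t' = y then h t * h t' else 0)]
  rw [if_pos (Finset.mem_univ _)]
  rcases eq_or_ne (E t) (E t') with hEq | hNe
  · rw [if_pos hEq.symm, if_pos hEq]
  · rw [if_neg (Ne.symm hNe), if_neg hNe]

def DD (z : (Fin n × Fin n) × (Fin n × Fin n)) : Finset (Fin n) := symmDiff (S z.1) (S z.2)
def cc (w : Fin n → Fin n → ℝ) (z : (Fin n × Fin n) × (Fin n × Fin n)) : ℝ := aa w z.1 * aa w z.2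

def g (w : Fin n → Fin n → ℝ) (D : Finset (Fin n)) : ℝ :=
  ∑ z ∈ P n ×ˢ P n, if DD z = D then cc w z else 0

lemma mom4 : ∑ s : Fin n → Bool, (F w s)^4
    = 2^n * ∑ D : Finset (Fin n), (g w D)^2 := by
  have expand2 : ∀ s : Fin n → Bool, (F w s)^2 = ∑ z ∈ P n ×ˢ P n, cc w z * chi (DD z) s := by
    intro s
    rw [sq, F, Finset.sum_mul_sum, Finset.sum_product]
    refine Finset.sum_congr rfl fun p _ => Finset.sum_congr rfl fun q _ => ?_
    simp only [cc, DD]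
    rw [← chi_mul]
    ring
  have expand4 : ∀ s : Fin n → Bool, (F w s)^4
      = ∑ z ∈ P n ×ˢ P n, ∑ z' ∈ P n ×ˢ P n,
          (cc w z * cc w z') * (chi (DD z) s * chi (DD z') s) := by
    intro s
    have : (F w s)^4 = ((F w s)^2)^2 := by ring
    rw [this, expand2, sq, Finset.sum_mul_sum]
    congr 1; ext z; congr 1; ext z'
    ring
  simp_rw [expand4]
  rw [Finset.sum_comm]
  have step : ∀ z ∈ P n ×ˢ P n, ∑ s : Fin n → Bool, ∑ z' ∈ P n ×ˢ P n,
      (cc w z * cc w z') * (chi (DD z) s * chi (DD z') s)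
      = ∑ z' ∈ P n ×ˢ P n, (if DD z = DD z' then cc w z * cc w z' else 0) * 2^n := by
    intro z _
    rw [Finset.sum_comm]
    refine Finset.sum_congr rfl fun z' _ => ?_
    rw [← Finset.mul_sum, sum_chi_mul]
    split_ifs <;> ring
  rw [Finset.sum_congr rfl step]
  have : ∑ z ∈ P n ×ˢ P n, ∑ z' ∈ P n ×ˢ P n,
      (if DD z = DD z' then cc w z * cc w z' else 0) * 2^n
      = (∑ z ∈ P n ×ˢ P n, ∑ z' ∈ P n ×ˢ P n,
        (if DD z = DD z' then cc w z * cc w z' else 0)) * (2:ℝ)^n := by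
    rw [Finset.sum_mul]
    refine Finset.sum_congr rfl fun z _ => ?_
    rw [Finset.sum_mul]
  rw [this, ← collapse (P n ×ˢ P n) DD (cc w)]
  rw [mul_comm]
  rfl

end Stmt9

namespace Stmt9
variable {n : ℕ} (w : Fin n → Fin n → ℝ)

def g0 (w : Fin n → Fin n → ℝ) (D : Finset (Fin n)) : ℝ :=
  ∑ z ∈ P n ×ˢ P n, if (z.1 = z.2 ∧ DD z = D) then cc w z else 0
def g2f (w : Fin n → Fin n → ℝ) (D : Finset (Fin n)) : ℝ :=
  ∑ z ∈ P n ×ˢ P n, if (z.1 ≠ z.2 ∧ ¬ Disjoint (S z.1) (S z.2) ∧ DD z = D) then cc w z else 0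
def g4f (w : Fin n → Fin n → ℝ) (D : Finset (Fin n)) : ℝ :=
  ∑ z ∈ P n ×ˢ P n, if (Disjoint (S z.1) (S z.2) ∧ DD z = D) then cc w z else 0

lemma S_nonempty (p : Fin n × Fin n) : (S p).Nonempty := Finset.insert_nonempty _ _

lemma g_split (D : Finset (Fin n)) : g w D = g0 w D + g2f w D + g4f w D := by
  rw [g, g0, g2f, g4f, ← Finset.sum_add_distrib, ← Finset.sum_add_distrib]
  refine Finset.sum_congr rfl fun z _ => ?_
  by_cases h1 : z.1 = z.2
  · have hnd : ¬ Disjoint (S z.1) (S z.2) := by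
      rw [← h1, Finset.disjoint_self_iff_empty]
      exact Finset.nonempty_iff_ne_empty.1 (S_nonempty z.1)
    simp only [h1, hnd, false_and, and_false, if_false, not_true, ite_eq_right_iff]
    simp [h1, hnd]
    exact fun hS _ => absurd hS (Finset.nonempty_iff_ne_empty.1 (S_nonempty z.2))
  · by_cases h2 : Disjoint (S z.1) (S z.2) <;> simp [h1, h2]

lemma g0_eq (D : Finset (Fin n)) : g0 w D = if D = ∅ then sig2 w else 0 := by
  by_cases hD : D = ∅
  · rw [if_pos hD, hD, g0, sig2, Finset.sum_product]
    refine Finset.sum_congr rfl fun p hp => ?_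
    rw [Finset.sum_eq_single_of_mem p hp]
    · rw [if_pos ⟨rfl, by simp [DD]⟩, cc, sq]
    · intro q hq hqp
      rw [if_neg]
      rintro ⟨h1, -⟩
      exact hqp h1.symm
  · rw [if_neg hD]
    refine Finset.sum_eq_zero fun z hz => ?_
    rw [if_neg]
    rintro ⟨h1, h2⟩
    refine hD ?_
    rw [← h2, DD, h1, symmDiff_self]
    rfl

lemma card_DD_two {z : (Fin n × Fin n) × (Fin n × Fin n)} (hz : z ∈ P n ×ˢ P n)
    (h1 : z.1 ≠ z.2) (h2 : ¬ Disjoint (S z.1) (S z.2)) : (DD z).card = 2 := by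
  rw [Finset.mem_product] at hz
  have c1 : (S z.1).card = 2 := card_S hz.1
  have c2 : (S z.2).card = 2 := card_S hz.2
  have hne : S z.1 ≠ S z.2 := fun h => h1 (S_inj hz.1 hz.2 h)
  have hint : (S z.1 ∩ S z.2).card = 1 := by
    have hpos : 0 < (S z.1 ∩ S z.2).card := by
      rcases Finset.not_disjoint_iff.1 h2 with ⟨x, hx1, hx2⟩
      exact Finset.card_pos.2 ⟨x, Finset.mem_inter.2 ⟨hx1, hx2⟩⟩
    have hlt : (S z.1 ∩ S z.2).card < 2 := by
      by_contra hle
      push_neg at hle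
      have e1 : S z.1 ∩ S z.2 = S z.1 :=
        Finset.eq_of_subset_of_card_le Finset.inter_subset_left (by omega)
      have e2 : S z.1 ∩ S z.2 = S z.2 :=
        Finset.eq_of_subset_of_card_le Finset.inter_subset_right (by omega)
      exact hne (e1 ▸ e2)
    omega
  have hd1 : (S z.1 \ S z.2).card = 1 := by
    have := Finset.card_sdiff_add_card_inter (S z.1) (S z.2)
    omega
  have hd2 : (S z.2 \ S z.1).card = 1 := by
    have := Finset.card_sdiff_add_card_inter (S z.2) (S z.1)
    rw [Finset.inter_comm] at this
    omega
  rw [DD, symmDiff_def]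
  rw [Finset.sup_eq_union, Finset.card_union_of_disjoint disjoint_sdiff_sdiff]
  omega

lemma card_DD_four {z : (Fin n × Fin n) × (Fin n × Fin n)} (hz : z ∈ P n ×ˢ P n)
    (h2 : Disjoint (S z.1) (S z.2)) : (DD z).card = 4 := by
  rw [Finset.mem_product] at hz
  rw [DD, h2.symmDiff_eq_sup, Finset.sup_eq_union,
    Finset.card_union_of_disjoint h2, card_S hz.1, card_S hz.2]

lemma g2_zero {D : Finset (Fin n)} (hD : D.card ≠ 2) : g2f w D = 0 := by
  refine Finset.sum_eq_zero fun z hz => ?_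
  rw [if_neg]
  rintro ⟨h1, h2, h3⟩
  exact hD (h3 ▸ card_DD_two hz h1 h2)

lemma g4_zero {D : Finset (Fin n)} (hD : D.card ≠ 4) : g4f w D = 0 := by
  refine Finset.sum_eq_zero fun z hz => ?_
  rw [if_neg]
  rintro ⟨h2, h3⟩
  exact hD (h3 ▸ card_DD_four hz h2)

lemma sq_split (D : Finset (Fin n)) :
    (g w D)^2 = (g0 w D)^2 + (g2f w D)^2 + (g4f w D)^2 := by
  rw [g_split]
  by_cases h0 : D = ∅
  · rw [g2_zero w (by simp [h0]), g4_zero w (by simp [h0])]; ring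
  · rw [g0_eq, if_neg h0]
    by_cases h2 : D.card = 2
    · rw [g4_zero w (by omega)]; ring
    · rw [g2_zero w h2]; ring

lemma bound0 : ∑ D : Finset (Fin n), (g0 w D)^2 = (sig2 w)^2 := by
  simp_rw [g0_eq]
  have : ∀ D : Finset (Fin n), (if D = ∅ then sig2 w else 0)^2
      = if D = ∅ then (sig2 w)^2 else 0 := by
    intro D; split_ifs <;> ring
  simp_rw [this]
  rw [Finset.sum_ite_eq' Finset.univ (∅ : Finset (Fin n)) (fun _ => (sig2 w)^2),
    if_pos (Finset.mem_univ _)]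

end Stmt9

namespace Stmt9
variable {n : ℕ} (w : Fin n → Fin n → ℝ)

lemma cc_sq_sum : ∑ z ∈ P n ×ˢ P n, (cc w z)^2 = (sig2 w)^2 := by
  rw [Finset.sum_product, sig2, sq, Finset.sum_mul_sum]
  refine Finset.sum_congr rfl fun p _ => Finset.sum_congr rfl fun q _ => ?_
  rw [cc]; ring

lemma g4_card_le {D : Finset (Fin n)} :
    ((P n ×ˢ P n).filter
      (fun z => Disjoint (S z.1) (S z.2) ∧ DD z = D)).card ≤ 6 := by
  set Fl := (P n ×ˢ P n).filter (fun z => Disjoint (S z.1) (S z.2) ∧ DD z = D) with hFl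
  rcases Fl.eq_empty_or_nonempty with hE | ⟨z₀, hz₀⟩
  · rw [hE]; simp
  · rw [hFl, Finset.mem_filter] at hz₀
    have hD4 : D.card = 4 := hz₀.2.2 ▸ card_DD_four hz₀.1 hz₀.2.1
    have key : ∀ z ∈ Fl, S z.1 ⊆ D ∧ S z.2 = D \ S z.1 := by
      intro z hz
      rw [hFl, Finset.mem_filter] at hz
      obtain ⟨hzP, hdisj, hDD⟩ := hz
      have hU : S z.1 ∪ S z.2 = D := by
        rw [← hDD, DD, hdisj.symmDiff_eq_sup]; rfl
      constructor
      · rw [← hU]; exact Finset.subset_union_left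
      · rw [← hU, Finset.union_sdiff_cancel_left hdisj]
    have inj : Set.InjOn (fun z : (Fin n × Fin n) × (Fin n × Fin n) => S z.1) ↑Fl := by
      intro z hz z' hz' hS
      simp only at hS
      have hzf := Finset.mem_coe.1 hz
      have hzf' := Finset.mem_coe.1 hz'
      have h2 : S z.2 = S z'.2 := by
        rw [(key z hzf).2, (key z' hzf').2, hS]
      have hzP := Finset.mem_product.1 (Finset.mem_filter.1 (hFl ▸ hzf)).1
      have hzP' := Finset.mem_product.1 (Finset.mem_filter.1 (hFl ▸ hzf')).1
      exact Prod.ext (S_inj hzP.1 hzP'.1 hS) (S_inj hzP.2 hzP'.2 h2)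
    have maps : ∀ z ∈ Fl, S z.1 ∈ D.powersetCard 2 := by
      intro z hz
      have hzP := Finset.mem_product.1 (Finset.mem_filter.1 (hFl ▸ hz)).1
      rw [Finset.mem_powersetCard]
      exact ⟨(key z hz).1, card_S hzP.1⟩
    calc Fl.card ≤ (D.powersetCard 2).card := Finset.card_le_card_of_injOn _ maps inj
    _ = 6 := by rw [Finset.card_powersetCard, hD4]; decide

lemma bound4 : ∑ D : Finset (Fin n), (g4f w D)^2 ≤ 6 * (sig2 w)^2 := by
  have inner_nonneg : ∀ D : Finset (Fin n),
      (0:ℝ) ≤ ∑ z ∈ P n ×ˢ P n,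
        (if (Disjoint (S z.1) (S z.2) ∧ DD z = D) then (cc w z)^2 else 0) := by
    intro D
    refine Finset.sum_nonneg fun z _ => ?_
    split_ifs with h
    · positivity
    · exact le_refl 0
  have h1 : ∀ D : Finset (Fin n), (g4f w D)^2 ≤ 6 * ∑ z ∈ P n ×ˢ P n,
      (if (Disjoint (S z.1) (S z.2) ∧ DD z = D) then (cc w z)^2 else 0) := by
    intro D
    have expand : g4f w D = ∑ z ∈ P n ×ˢ P n,
        (if (Disjoint (S z.1) (S z.2) ∧ DD z = D) then (1:ℝ) else 0)
          * (if (Disjoint (S z.1) (S z.2) ∧ DD z = D) then cc w z else 0) := by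
      rw [g4f]
      refine Finset.sum_congr rfl fun z _ => ?_
      split_ifs <;> ring
    have cs := Finset.sum_mul_sq_le_sq_mul_sq (P n ×ˢ P n)
      (fun z => if (Disjoint (S z.1) (S z.2) ∧ DD z = D) then (1:ℝ) else 0)
      (fun z => if (Disjoint (S z.1) (S z.2) ∧ DD z = D) then cc w z else 0)
    have e1 : ∑ z ∈ P n ×ˢ P n,
        (if (Disjoint (S z.1) (S z.2) ∧ DD z = D) then (1:ℝ) else 0)^2
        = ∑ z ∈ P n ×ˢ P n,
        (if (Disjoint (S z.1) (S z.2) ∧ DD z = D) then (1:ℝ) else 0) := by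
      refine Finset.sum_congr rfl fun z _ => ?_
      split_ifs <;> ring
    have e2 : ∑ z ∈ P n ×ˢ P n,
        (if (Disjoint (S z.1) (S z.2) ∧ DD z = D) then cc w z else 0)^2
        = ∑ z ∈ P n ×ˢ P n,
        (if (Disjoint (S z.1) (S z.2) ∧ DD z = D) then (cc w z)^2 else 0) := by
      refine Finset.sum_congr rfl fun z _ => ?_
      split_ifs <;> ring
    rw [e1, e2] at cs
    rw [expand]
    refine cs.trans ?_
    refine mul_le_mul_of_nonneg_right ?_ (inner_nonneg D)
    rw [Finset.sum_boole]
    have := g4_card_le (n := n) (D := D)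
    exact_mod_cast this
  calc ∑ D : Finset (Fin n), (g4f w D)^2
      ≤ ∑ D : Finset (Fin n), 6 * ∑ z ∈ P n ×ˢ P n,
          (if (Disjoint (S z.1) (S z.2) ∧ DD z = D) then (cc w z)^2 else 0) :=
        Finset.sum_le_sum fun D _ => h1 D
    _ = 6 * ∑ D : Finset (Fin n), ∑ z ∈ P n ×ˢ P n,
          (if (Disjoint (S z.1) (S z.2) ∧ DD z = D) then (cc w z)^2 else 0) := by
        rw [Finset.mul_sum]
    _ ≤ 6 * (sig2 w)^2 := by
        have hswap : ∑ D : Finset (Fin n), ∑ z ∈ P n ×ˢ P n,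
            (if (Disjoint (S z.1) (S z.2) ∧ DD z = D) then (cc w z)^2 else 0)
            ≤ (sig2 w)^2 := by
          rw [Finset.sum_comm]
          have hz : ∀ z ∈ P n ×ˢ P n, ∑ D : Finset (Fin n),
              (if (Disjoint (S z.1) (S z.2) ∧ DD z = D) then (cc w z)^2 else 0)
              ≤ (cc w z)^2 := by
            intro z _
            have hre : ∀ D : Finset (Fin n),
                (if (Disjoint (S z.1) (S z.2) ∧ DD z = D) then (cc w z)^2 else 0)
                = if D = DD z then
                    (if Disjoint (S z.1) (S z.2) then (cc w z)^2 else 0) else 0 := by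
              intro D
              by_cases hA : Disjoint (S z.1) (S z.2) <;>
                by_cases hD : D = DD z <;> simp [hA, hD, eq_comm]
            simp_rw [hre]
            rw [Finset.sum_ite_eq' Finset.univ (DD z)
              (fun _ => if Disjoint (S z.1) (S z.2) then (cc w z)^2 else 0),
              if_pos (Finset.mem_univ _)]
            split_ifs
            · exact le_refl _
            · positivity
          calc ∑ z ∈ P n ×ˢ P n, ∑ D : Finset (Fin n),
              (if (Disjoint (S z.1) (S z.2) ∧ DD z = D) then (cc w z)^2 else 0)
              ≤ ∑ z ∈ P n ×ˢ P n, (cc w z)^2 := Finset.sum_le_sum hz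
            _ = (sig2 w)^2 := cc_sq_sum w
        linarith

end Stmt9

namespace Stmt9
variable {n : ℕ} (w : Fin n → Fin n → ℝ)

def bb (w : Fin n → Fin n → ℝ) (i j : Fin n) : ℝ :=
  if i < j then w i j else if j < i then w j i else 0

lemma bb_symm (i j : Fin n) : bb w i j = bb w j i := by
  rcases lt_trichotomy i j with h | h | h
  · rw [bb, bb, if_pos h, if_neg (lt_asymm h), if_pos h]
  · rw [h]
  · rw [bb, bb, if_neg (lt_asymm h), if_pos h, if_pos h]

lemma bb_diag (i : Fin n) : bb w i i = 0 := by
  rw [bb, if_neg (lt_irrefl i), if_neg (lt_irrefl i)]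

def edge (i j : Fin n) : Fin n × Fin n := if i < j then (i, j) else (j, i)

lemma edge_mem {i j : Fin n} (h : i ≠ j) : edge i j ∈ P n := by
  rcases h.lt_or_gt with hlt | hlt
  · rw [edge, if_pos hlt, mem_P]; exact hlt
  · rw [edge, if_neg (lt_asymm hlt), mem_P]; exact hlt

lemma S_edge {i j : Fin n} (h : i ≠ j) : S (edge i j) = {i, j} := by
  rcases h.lt_or_gt with hlt | hlt
  · rw [edge, if_pos hlt]; rfl
  · rw [edge, if_neg (lt_asymm hlt), S]
    exact Finset.pair_comm j i

lemma aa_edge {i j : Fin n} (h : i ≠ j) : aa w (edge i j) = bb w i j := by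
  rcases h.lt_or_gt with hlt | hlt
  · rw [edge, if_pos hlt, bb, if_pos hlt]; rfl
  · rw [edge, if_neg (lt_asymm hlt), bb, if_neg (lt_asymm hlt), if_pos hlt]; rfl

lemma edge_of_S {i j : Fin n} {p : Fin n × Fin n} (hp : p ∈ P n) (h : i ≠ j)
    (hS : ({i, j} : Finset (Fin n)) = S p) : edge i j = p :=
  S_inj (edge_mem h) hp (by rw [S_edge h, hS])

lemma pair_eq_cases {x y x' y' : Fin n} (h : ({x, y} : Finset (Fin n)) = {x', y'}) :
    (x = x' ∧ y = y') ∨ (x = y' ∧ y = x') := by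
  have m1 : x = x' ∨ x = y' := by
    have : x ∈ ({x', y'} : Finset (Fin n)) := h ▸ (by simp)
    simpa using this
  have m2 : y = x' ∨ y = y' := by
    have : y ∈ ({x', y'} : Finset (Fin n)) := h ▸ (by simp)
    simpa using this
  have m3 : x' = x ∨ x' = y := by
    have : x' ∈ ({x, y} : Finset (Fin n)) := h.symm ▸ (by simp)
    simpa using this
  have m4 : y' = x ∨ y' = y := by
    have : y' ∈ ({x, y} : Finset (Fin n)) := h.symm ▸ (by simp)
    simpa using this
  simp only [Fin.ext_iff] at m1 m2 m3 m4 ⊢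
  omega

def TR (n : ℕ) : Finset ((Fin n × Fin n) × Fin n) :=
  Finset.univ.filter (fun t => t.1.1 ≠ t.1.2 ∧ t.2 ≠ t.1.1 ∧ t.2 ≠ t.1.2)

def P2 (n : ℕ) : Finset ((Fin n × Fin n) × (Fin n × Fin n)) :=
  (P n ×ˢ P n).filter (fun z => z.1 ≠ z.2 ∧ ¬ Disjoint (S z.1) (S z.2))

def psi (t : (Fin n × Fin n) × Fin n) : (Fin n × Fin n) × (Fin n × Fin n) :=
  (edge t.2 t.1.1, edge t.2 t.1.2)

lemma mem_TR {t : (Fin n × Fin n) × Fin n} :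
    t ∈ TR n ↔ t.1.1 ≠ t.1.2 ∧ t.2 ≠ t.1.1 ∧ t.2 ≠ t.1.2 := by simp [TR]

lemma psi_DD {t : (Fin n × Fin n) × Fin n} (ht : t ∈ TR n) :
    DD (psi t) = {t.1.1, t.1.2} := by
  obtain ⟨huv, hcu, hcv⟩ := mem_TR.1 ht
  rw [DD]
  show symmDiff (S (edge t.2 t.1.1)) (S (edge t.2 t.1.2)) = _
  rw [S_edge hcu, S_edge hcv]
  ext x
  simp only [Finset.mem_symmDiff, Finset.mem_insert, Finset.mem_singleton]
  by_cases hxc : x = t.2 <;> by_cases hxu : x = t.1.1 <;> by_cases hxv : x = t.1.2 <;>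
    simp_all

lemma psi_cc {t : (Fin n × Fin n) × Fin n} (ht : t ∈ TR n) :
    cc w (psi t) = bb w t.1.1 t.2 * bb w t.1.2 t.2 := by
  obtain ⟨huv, hcu, hcv⟩ := mem_TR.1 ht
  show aa w (edge t.2 t.1.1) * aa w (edge t.2 t.1.2) = _
  rw [aa_edge w hcu, aa_edge w hcv, bb_symm w t.2, bb_symm w t.2]

lemma psi_maps {t : (Fin n × Fin n) × Fin n} (ht : t ∈ TR n) : psi t ∈ P2 n := by
  obtain ⟨huv, hcu, hcv⟩ := mem_TR.1 ht
  rw [P2, Finset.mem_filter, Finset.mem_product]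
  refine ⟨⟨edge_mem hcu, edge_mem hcv⟩, ?_, ?_⟩
  · intro h
    have hS : ({t.2, t.1.1} : Finset (Fin n)) = {t.2, t.1.2} := by
      rw [← S_edge hcu, ← S_edge hcv]
      exact congrArg S h
    rcases pair_eq_cases hS with ⟨-, h2⟩ | ⟨h1, -⟩
    · exact huv h2
    · exact hcv h1
  · rw [Finset.not_disjoint_iff]
    refine ⟨t.2, ?_, ?_⟩
    · show t.2 ∈ S (edge t.2 t.1.1)
      rw [S_edge hcu]; simp
    · show t.2 ∈ S (edge t.2 t.1.2)
      rw [S_edge hcv]; simp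

lemma psi_inj : Set.InjOn (psi (n := n)) ↑(TR n) := by
  intro t ht t' ht' h
  have ht1 := mem_TR.1 (Finset.mem_coe.1 ht)
  have ht2 := mem_TR.1 (Finset.mem_coe.1 ht')
  obtain ⟨huv, hcu, hcv⟩ := ht1
  obtain ⟨huv', hcu', hcv'⟩ := ht2
  have h1 : edge t.2 t.1.1 = edge t'.2 t'.1.1 := congrArg Prod.fst h
  have h2 : edge t.2 t.1.2 = edge t'.2 t'.1.2 := congrArg Prod.snd h
  have hS1 : ({t.2, t.1.1} : Finset (Fin n)) = {t'.2, t'.1.1} := by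
    rw [← S_edge hcu, ← S_edge hcu', h1]
  have hS2 : ({t.2, t.1.2} : Finset (Fin n)) = {t'.2, t'.1.2} := by
    rw [← S_edge hcv, ← S_edge hcv', h2]
  rcases pair_eq_cases hS1 with ⟨e1, e2⟩ | ⟨e1, e2⟩
  · rcases pair_eq_cases hS2 with ⟨f1, f2⟩ | ⟨f1, f2⟩
    · exact Prod.ext (Prod.ext e2 f2) e1
    · exact absurd (e1.symm.trans f1) hcv'
  · rcases pair_eq_cases hS2 with ⟨f1, f2⟩ | ⟨f1, f2⟩
    · exact absurd (f1.symm.trans e1) hcu'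
    · exact absurd (e1.symm.trans f1) huv'
      
lemma psi_surj : Set.SurjOn (psi (n := n)) ↑(TR n) ↑(P2 n) := by
  intro z hz
  have hz' := Finset.mem_filter.1 (Finset.mem_coe.1 hz)
  obtain ⟨hzP, hne, hndisj⟩ := hz'
  obtain ⟨hp, hq⟩ := Finset.mem_product.1 hzP
  obtain ⟨x, hx1, hx2⟩ := Finset.not_disjoint_iff.1 hndisj
  have hp12 : z.1.1 ≠ z.1.2 := Fin.ne_of_lt (mem_P.1 hp)
  have hq12 : z.2.1 ≠ z.2.2 := Fin.ne_of_lt (mem_P.1 hq)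
  have hxSp : x = z.1.1 ∨ x = z.1.2 := by simpa [S] using hx1
  have hxSq : x = z.2.1 ∨ x = z.2.2 := by simpa [S] using hx2
  obtain ⟨u, huS, hux⟩ : ∃ u, ({x, u} : Finset (Fin n)) = S z.1 ∧ u ≠ x := by
    rcases hxSp with h | h
    · exact ⟨z.1.2, by rw [h]; rfl, by rw [h]; exact hp12.symm⟩
    · exact ⟨z.1.1, by rw [h, Finset.pair_comm]; rfl, by rw [h]; exact hp12⟩
  obtain ⟨v, hvS, hvx⟩ : ∃ v, ({x, v} : Finset (Fin n)) = S z.2 ∧ v ≠ x := by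
    rcases hxSq with h | h
    · exact ⟨z.2.2, by rw [h]; rfl, by rw [h]; exact hq12.symm⟩
    · exact ⟨z.2.1, by rw [h, Finset.pair_comm]; rfl, by rw [h]; exact hq12⟩
  have huv : u ≠ v := by
    intro h
    apply hne
    apply S_inj hp hq
    rw [← huS, ← hvS, h]
  refine ⟨((u, v), x), ?_, ?_⟩
  · rw [Finset.mem_coe, mem_TR]
    exact ⟨huv, hux.symm, hvx.symm⟩
  · show psi ((u, v), x) = z
    refine Prod.ext ?_ ?_
    · exact edge_of_S hp hux.symm huS
    · exact edge_of_S hq hvx.symm hvS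

end Stmt9

namespace Stmt9
variable {n : ℕ} (w : Fin n → Fin n → ℝ)

def UV (n : ℕ) : Finset (Fin n × Fin n) := Finset.univ.filter (fun y => y.1 ≠ y.2)

def mm (w : Fin n → Fin n → ℝ) (y : Fin n × Fin n) : ℝ := ∑ c : Fin n, bb w y.1 c * bb w y.2 c

lemma g2_eq (D : Finset (Fin n)) :
    g2f w D = ∑ z ∈ P2 n, if DD z = D then cc w z else 0 := by
  rw [P2, Finset.sum_filter, g2f]
  refine Finset.sum_congr rfl fun z _ => ?_
  by_cases hA : z.1 ≠ z.2 ∧ ¬ Disjoint (S z.1) (S z.2) <;> by_cases hB : DD z = D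
  · rw [if_pos ⟨hA.1, hA.2, hB⟩, if_pos hA, if_pos hB]
  · rw [if_neg (by tauto), if_pos hA, if_neg hB]
  · rw [if_neg (by tauto), if_neg hA]
  · rw [if_neg (by tauto), if_neg hA]

lemma g2_tr (D : Finset (Fin n)) :
    g2f w D = ∑ y ∈ UV n, if ({y.1, y.2} : Finset (Fin n)) = D then mm w y else 0 := by
  rw [g2_eq]
  rw [← Finset.sum_nbij (psi (n := n)) (fun t ht => psi_maps ht) psi_inj psi_surj
    (f := fun t => if ({t.1.1, t.1.2} : Finset (Fin n)) = D
      then bb w t.1.1 t.2 * bb w t.1.2 t.2 else 0)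
    (fun t ht => by rw [psi_DD ht, psi_cc w ht])]
  rw [TR, Finset.sum_filter, UV, Finset.sum_filter]
  rw [← Finset.univ_product_univ, Finset.sum_product]
  dsimp only
  refine Finset.sum_congr rfl fun y _ => ?_
  by_cases h1 : y.1 ≠ y.2
  · rw [if_pos h1]
    by_cases h2 : ({y.1, y.2} : Finset (Fin n)) = D
    · rw [if_pos h2, mm]
      refine Finset.sum_congr rfl fun c _ => ?_
      by_cases h3 : c = y.1
      · rw [if_neg (by tauto), h3, bb_diag, zero_mul]
      · by_cases h4 : c = y.2
        · rw [if_neg (by tauto), h4, bb_diag, mul_zero]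
        · rw [if_pos ⟨h1, h3, h4⟩, if_pos h2]
    · rw [if_neg h2]
      refine Finset.sum_eq_zero fun c _ => ?_
      split_ifs <;> rfl
  · rw [if_neg h1]
    refine Finset.sum_eq_zero fun c _ => ?_
    rw [if_neg (by tauto)]

end Stmt9

namespace Stmt9
variable {n : ℕ} (w : Fin n → Fin n → ℝ)

lemma mm_swap (y : Fin n × Fin n) : mm w (y.2, y.1) = mm w y := by
  rw [mm, mm]
  exact Finset.sum_congr rfl fun c _ => mul_comm _ _

lemma B_eq : ∑ i : Fin n, ∑ c : Fin n, (bb w i c)^2 = 2 * sig2 w := by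
  have point : ∀ i c : Fin n, (bb w i c)^2
      = (if i < c then (w i c)^2 else 0) + (if c < i then (w c i)^2 else 0) := by
    intro i c
    rcases lt_trichotomy i c with h | h | h
    · rw [bb, if_pos h, if_pos h, if_neg (lt_asymm h), add_zero]
    · rw [h, bb]; simp [lt_irrefl]
    · rw [bb, if_neg (lt_asymm h), if_pos h, if_neg (lt_asymm h), if_pos h, zero_add]
  simp_rw [point, Finset.sum_add_distrib]
  have h1 : ∑ i : Fin n, ∑ c : Fin n, (if i < c then (w i c)^2 else 0) = sig2 w := by
    rw [sig2, P, Finset.sum_filter, ← Finset.univ_product_univ, Finset.sum_product]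
    rfl
  have h2 : ∑ i : Fin n, ∑ c : Fin n, (if c < i then (w c i)^2 else 0) = sig2 w := by
    rw [Finset.sum_comm]; exact h1
  rw [h1, h2]; ring

lemma bound2 : ∑ D : Finset (Fin n), (g2f w D)^2 ≤ 8 * (sig2 w)^2 := by
  have hrw : ∀ D : Finset (Fin n), g2f w D
      = ∑ y ∈ UV n, if (fun y : Fin n × Fin n => ({y.1, y.2} : Finset (Fin n))) y = D
          then mm w y else 0 := fun D => g2_tr w D
  simp_rw [hrw]
  rw [collapse (UV n) (fun y : Fin n × Fin n => ({y.1, y.2} : Finset (Fin n))) (mm w)]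
  have per : ∀ y ∈ UV n, ∑ y' ∈ UV n,
      (if ({y.1, y.2} : Finset (Fin n)) = {y'.1, y'.2} then mm w y * mm w y' else 0)
      = 2 * (mm w y)^2 := by
    intro y hy
    have hyne : y.1 ≠ y.2 := by
      have := (Finset.mem_filter.1 (by rwa [UV] at hy)).2
      exact this
    have hsplit : ∀ y' ∈ UV n,
        (if ({y.1, y.2} : Finset (Fin n)) = {y'.1, y'.2} then mm w y * mm w y' else 0)
        = (if y' = y then mm w y * mm w y' else 0)
          + (if y' = (y.2, y.1) then mm w y * mm w y' else 0) := by
      intro y' _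
      by_cases hA : y' = y
      · rw [if_pos hA, if_pos (by rw [hA]), if_neg, add_zero]
        intro hB
        rw [hA] at hB
        exact hyne (congrArg Prod.fst hB)
      · by_cases hB : y' = (y.2, y.1)
        · rw [if_pos hB, if_neg hA, if_pos, zero_add]
          rw [hB]
          exact Finset.pair_comm y.1 y.2
        · rw [if_neg hA, if_neg hB, if_neg, add_zero]
          intro h
          rcases pair_eq_cases h with ⟨e1, e2⟩ | ⟨e1, e2⟩
          · exact hA (Prod.ext e1.symm e2.symm)
          · exact hB (Prod.ext e2.symm e1.symm)
    rw [Finset.sum_congr rfl hsplit, Finset.sum_add_distrib,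
      Finset.sum_ite_eq' (UV n) y (fun y' => mm w y * mm w y'),
      Finset.sum_ite_eq' (UV n) (y.2, y.1) (fun y' => mm w y * mm w y'),
      if_pos hy, if_pos, mm_swap]
    · ring
    · rw [UV, Finset.mem_filter]
      exact ⟨Finset.mem_univ _, Ne.symm hyne⟩
  rw [Finset.sum_congr rfl per]
  have step1 : ∑ y ∈ UV n, 2 * (mm w y)^2 ≤ ∑ y : Fin n × Fin n, 2 * (mm w y)^2 := by
    refine Finset.sum_le_sum_of_subset_of_nonneg (Finset.filter_subset _ _) ?_
    intro y _ _
    positivity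
  have step2 : ∀ y : Fin n × Fin n,
      (mm w y)^2 ≤ (∑ c : Fin n, (bb w y.1 c)^2) * (∑ c : Fin n, (bb w y.2 c)^2) :=
    fun y => Finset.sum_mul_sq_le_sq_mul_sq Finset.univ _ _
  have step3 : ∑ y : Fin n × Fin n,
      (∑ c : Fin n, (bb w y.1 c)^2) * (∑ c : Fin n, (bb w y.2 c)^2)
      = (∑ i : Fin n, ∑ c : Fin n, (bb w i c)^2)^2 := by
    rw [sq, Finset.sum_mul_sum, ← Finset.univ_product_univ, Finset.sum_product]
  calc ∑ y ∈ UV n, 2 * (mm w y)^2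
      ≤ ∑ y : Fin n × Fin n, 2 * (mm w y)^2 := step1
    _ ≤ ∑ y : Fin n × Fin n,
        2 * ((∑ c : Fin n, (bb w y.1 c)^2) * (∑ c : Fin n, (bb w y.2 c)^2)) := by
        refine Finset.sum_le_sum fun y _ => ?_
        have := step2 y
        linarith
    _ = 2 * (∑ i : Fin n, ∑ c : Fin n, (bb w i c)^2)^2 := by
        rw [← Finset.mul_sum, step3]
    _ = 8 * (sig2 w)^2 := by rw [B_eq]; ring

lemma mom4_le : ∑ s : Fin n → Bool, (F w s)^4 ≤ 2^n * (15 * (sig2 w)^2) := by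
  rw [mom4]
  have : ∑ D : Finset (Fin n), (g w D)^2 ≤ 15 * (sig2 w)^2 := by
    have e : ∑ D : Finset (Fin n), (g w D)^2
        = ∑ D : Finset (Fin n), (g0 w D)^2 + ∑ D : Finset (Fin n), (g2f w D)^2
          + ∑ D : Finset (Fin n), (g4f w D)^2 := by
      rw [← Finset.sum_add_distrib, ← Finset.sum_add_distrib]
      exact Finset.sum_congr rfl fun D _ => sq_split w D
    rw [e, bound0]
    have := bound2 w
    have := bound4 w
    linarith
  have h2n : (0:ℝ) ≤ 2^n := by positivity
  exact mul_le_mul_of_nonneg_left this h2n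

end Stmt9

namespace Stmt9
variable {n : ℕ} (w : Fin n → Fin n → ℝ)

set_option maxHeartbeats 2000000 in
lemma count_key (hw : ∃ p ∈ P n, aa w p ≠ 0) :
    (2:ℝ)^n ≤ 60 * ((Finset.univ.filter (fun s : Fin n → Bool => F w s ≤ 0)).card : ℝ) := by
  classical
  set T : ℝ := (2:ℝ)^n with hT
  set Negs := Finset.univ.filter (fun s : Fin n → Bool => F w s ≤ 0) with hNegs
  set N : ℝ := (Negs.card : ℝ) with hN
  set M1 : ℝ := ∑ s : Fin n → Bool, |F w s| with hM1
  set M2 : ℝ := ∑ s : Fin n → Bool, (F w s)^2 with hM2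
  set M3 : ℝ := ∑ s : Fin n → Bool, |F w s|^3 with hM3
  set M4 : ℝ := ∑ s : Fin n → Bool, (F w s)^4 with hM4
  have hTpos : (0:ℝ) < T := by rw [hT]; positivity
  have hsig : 0 < sig2 w := by
    obtain ⟨p, hp, hap⟩ := hw
    have h1 : (0:ℝ) < (aa w p)^2 := by positivity
    have h2 : (aa w p)^2 ≤ sig2 w := by
      rw [sig2]
      exact Finset.single_le_sum (fun q _ => sq_nonneg (aa w q)) hp
    linarith
  have hM2eq : M2 = T * sig2 w := mom2 w
  have hM4le : M4 ≤ T * (15 * (sig2 w)^2) := mom4_le w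
  have hM4nn : 0 ≤ M4 := Finset.sum_nonneg fun s _ => by positivity
  have hM1nn : 0 ≤ M1 := Finset.sum_nonneg fun s _ => abs_nonneg _
  have hM3nn : 0 ≤ M3 := Finset.sum_nonneg fun s _ => by positivity
  have hNnn : 0 ≤ N := by rw [hN]; positivity
  have hM2pos : 0 < M2 := by rw [hM2eq]; positivity
  -- A := mass of negative part
  set A : ℝ := ∑ s ∈ Negs, (-(F w s)) with hA
  have habs : M1 = 2 * A := by
    have split1 : M1 = ∑ s ∈ Negs, |F w s|
        + ∑ s ∈ Finset.univ.filter (fun s => ¬ (F w s ≤ 0)), |F w s| := by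
      rw [hM1, hNegs]
      exact (Finset.sum_filter_add_sum_filter_not _ _ _).symm
    have split2 : (0:ℝ) = ∑ s ∈ Negs, F w s
        + ∑ s ∈ Finset.univ.filter (fun s => ¬ (F w s ≤ 0)), F w s := by
      rw [hNegs, Finset.sum_filter_add_sum_filter_not]
      exact (mom1 w).symm
    have e1 : ∑ s ∈ Negs, |F w s| = A := by
      rw [hA]
      refine Finset.sum_congr rfl fun s hs => ?_
      rw [hNegs, Finset.mem_filter] at hs
      exact abs_of_nonpos hs.2
    have e2 : ∑ s ∈ Finset.univ.filter (fun s => ¬ (F w s ≤ 0)), |F w s|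
        = ∑ s ∈ Finset.univ.filter (fun s => ¬ (F w s ≤ 0)), F w s := by
      refine Finset.sum_congr rfl fun s hs => ?_
      rw [Finset.mem_filter] at hs
      push_neg at hs
      exact abs_of_pos hs.2
    have e3 : ∑ s ∈ Negs, F w s = -A := by
      rw [hA, Finset.sum_neg_distrib]; ring
    rw [split1, e1, e2]
    rw [e3] at split2
    linarith
  have hCS1 : A^2 ≤ N * M2 := by
    have cs := Finset.sum_mul_sq_le_sq_mul_sq Negs (fun _ => (1:ℝ)) (fun s => -(F w s))
    have l1 : ∑ s ∈ Negs, (1:ℝ) * (-(F w s)) = A := by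
      rw [hA]; exact Finset.sum_congr rfl fun s _ => one_mul _
    have l2 : ∑ s ∈ Negs, (1:ℝ)^2 = N := by
      rw [hN]
      simp
    have l3 : ∑ s ∈ Negs, (-(F w s))^2 ≤ M2 := by
      rw [hM2]
      refine Finset.sum_le_sum_of_subset_of_nonneg (Finset.filter_subset _ _) ?_ |>.trans_eq ?_
      · intro s _ _; positivity
      · exact Finset.sum_congr rfl fun s _ => by ring
    rw [l1, l2] at cs
    calc A^2 ≤ N * ∑ s ∈ Negs, (-(F w s))^2 := cs
      _ ≤ N * M2 := mul_le_mul_of_nonneg_left l3 hNnn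
  have hCS2 : M2^2 ≤ M1 * M3 := by
    have cs := Finset.sum_mul_sq_le_sq_mul_sq Finset.univ
      (fun s => Real.sqrt |F w s|) (fun s => Real.sqrt (|F w s|^3))
    have l1 : ∑ s : Fin n → Bool, Real.sqrt |F w s| * Real.sqrt (|F w s|^3) = M2 := by
      rw [hM2]
      refine Finset.sum_congr rfl fun s _ => ?_
      rw [← Real.sqrt_mul (abs_nonneg _)]
      have : |F w s| * |F w s|^3 = ((F w s)^2)^2 := by
        have h4 : |F w s| * |F w s|^3 = |F w s|^4 := by ring
        rw [h4]
        have : |F w s|^4 = (|F w s|^2)^2 := by ring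
        rw [this, sq_abs]
      rw [this, Real.sqrt_sq (sq_nonneg _)]
    have l2 : ∑ s : Fin n → Bool, (Real.sqrt |F w s|)^2 = M1 := by
      rw [hM1]
      exact Finset.sum_congr rfl fun s _ => Real.sq_sqrt (abs_nonneg _)
    have l3 : ∑ s : Fin n → Bool, (Real.sqrt (|F w s|^3))^2 = M3 := by
      rw [hM3]
      exact Finset.sum_congr rfl fun s _ => Real.sq_sqrt (by positivity)
    rw [l1, l2, l3] at cs
    exact cs
  have hCS3 : M3^2 ≤ M2 * M4 := by
    have cs := Finset.sum_mul_sq_le_sq_mul_sq Finset.univ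
      (fun s => |F w s|) (fun s => (F w s)^2)
    have l1 : ∑ s : Fin n → Bool, |F w s| * (F w s)^2 = M3 := by
      rw [hM3]
      refine Finset.sum_congr rfl fun s _ => ?_
      rw [← sq_abs]
      ring
    have l2 : ∑ s : Fin n → Bool, |F w s|^2 = M2 := by
      rw [hM2]
      exact Finset.sum_congr rfl fun s _ => sq_abs _
    have l3 : ∑ s : Fin n → Bool, ((F w s)^2)^2 = M4 := by
      rw [hM4]
      exact Finset.sum_congr rfl fun s _ => by ring
    rw [l1, l2, l3] at cs
    exact cs
  have key3 : M2^3 ≤ M1^2 * M4 := by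
    nlinarith [mul_self_le_mul_self (sq_nonneg M2) hCS2,
      mul_le_mul_of_nonneg_left hCS3 (sq_nonneg M1), hM2pos, hM1nn, hM3nn, hM4nn]
  have hA2 : M1^2 ≤ 4 * (N * M2) := by
    rw [habs]
    nlinarith [hCS1]
  have hpos : 0 < T^2 * (sig2 w)^3 := by positivity
  have hchain : T * (T^2 * (sig2 w)^3) ≤ (60 * N) * (T^2 * (sig2 w)^3) := by
    calc T * (T^2 * (sig2 w)^3) = (T * sig2 w)^3 := by ring
      _ = M2^3 := by rw [hM2eq]
      _ ≤ M1^2 * M4 := key3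
      _ ≤ (4 * (N * M2)) * (T * (15 * (sig2 w)^2)) := by
          refine mul_le_mul hA2 hM4le hM4nn ?_
          positivity
      _ = (60 * N) * (T^2 * (sig2 w)^3) := by rw [hM2eq]; ring
  exact le_of_mul_le_mul_right hchain hpos

end Stmt9

namespace Stmt9
variable {n : ℕ} (w : Fin n → Fin n → ℝ)

lemma F_eq (s : Fin n → Bool) :
    F w s = ∑ i, ∑ j ∈ Finset.Ioi i, w i j * r (s i) * r (s j) := by
  rw [F, P, Finset.sum_filter, ← Finset.univ_product_univ, Finset.sum_product]
  refine Finset.sum_congr rfl fun i _ => ?_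
  have hIoi : Finset.Ioi i = Finset.univ.filter (fun j => i < j) := by
    ext j; simp [Finset.mem_Ioi]
  rw [hIoi, Finset.sum_filter]
  refine Finset.sum_congr rfl fun j _ => ?_
  by_cases h : i < j
  · rw [if_pos h, if_pos h]
    show aa w (i, j) * chi (S (i, j)) s = _
    rw [S, chi]
    show aa w (i, j) * ∏ x ∈ ({i, j} : Finset (Fin n)), r (s x) = _
    rw [Finset.prod_pair (Fin.ne_of_lt h)]
    show w i j * (r (s i) * r (s j)) = w i j * r (s i) * r (s j)
    ring
  · rw [if_neg h, if_neg h]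

end Stmt9

open MeasureTheory ProbabilityTheory
open scoped ENNReal NNReal

theorem stmt_9 {Ω : Type*} [MeasureSpace Ω] [IsProbabilityMeasure (volume : Measure Ω)]
    (n : ℕ) (w : Fin n → Fin n → ℝ)
    (hw : ∃ i j : Fin n, i < j ∧ w i j ≠ 0)
    (ξ : Fin n → Ω → ℝ) (hmeas : ∀ i, Measurable (ξ i))
    (hindep : iIndepFun ξ (volume : Measure Ω))
    (hlaw : ∀ i, Measure.map (ξ i) (volume : Measure Ω)
      = (2⁻¹ : ℝ≥0∞) • Measure.dirac (-1 : ℝ) + (2⁻¹ : ℝ≥0∞) • Measure.dirac (1 : ℝ)) :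
    ((volume : Measure Ω)
        {ω | ∑ i, ∑ j ∈ Finset.Ioi i, w i j * ξ i ω * ξ j ω ≤ 0}).toReal > 1 / 87 := by
  classical
  set ν : Measure ℝ := (2⁻¹ : ℝ≥0∞) • Measure.dirac (-1 : ℝ) + (2⁻¹ : ℝ≥0∞) • Measure.dirac (1 : ℝ)
    with hν
  haveI hνprob : IsProbabilityMeasure ν := by
    constructor
    rw [hν]
    simp
    rw [ENNReal.inv_two_add_inv_two]
  set Φ : Ω → (Fin n → ℝ) := fun ω i => ξ i ω with hΦ
  have hΦmeas : Measurable Φ := measurable_pi_iff.2 fun i => hmeas i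
  set G : (Fin n → ℝ) → ℝ := fun x => ∑ i, ∑ j ∈ Finset.Ioi i, w i j * x i * x j with hG
  have hGmeas : Measurable G := by
    apply Finset.measurable_sum
    intro i _
    apply Finset.measurable_sum
    intro j _
    exact (measurable_const.mul (measurable_pi_apply i)).mul (measurable_pi_apply j)
  have hsetmeas : MeasurableSet {x : Fin n → ℝ | G x ≤ 0} :=
    measurableSet_le hGmeas measurable_const
  have hpre : {ω | ∑ i, ∑ j ∈ Finset.Ioi i, w i j * ξ i ω * ξ j ω ≤ 0}
      = Φ ⁻¹' {x | G x ≤ 0} := rfl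
  -- map equals product measure
  have hmap : Measure.map Φ volume = Measure.pi (fun _ : Fin n => ν) := by
    refine (Measure.pi_eq ?_).symm
    intro A hA
    rw [Measure.map_apply hΦmeas (MeasurableSet.univ_pi hA)]
    have hpre2 : Φ ⁻¹' (Set.univ.pi A) = ⋂ i, ξ i ⁻¹' A i := by
      ext ω; simp [Set.mem_univ_pi, hΦ]
    rw [hpre2]
    rw [hindep.meas_iInter (fun i => ⟨A i, hA i, rfl⟩)]
    refine Finset.prod_congr rfl fun i _ => ?_
    rw [← Measure.map_apply (hmeas i) (hA i), hlaw i]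
  -- product measure is the discrete measure
  set ρ : Measure (Fin n → ℝ) :=
    ∑ s : Fin n → Bool, ((2:ℝ≥0∞)⁻¹)^n • Measure.dirac (fun i => Stmt9.r (s i)) with hρ
  have hpi : Measure.pi (fun _ : Fin n => ν) = ρ := by
    refine Measure.pi_eq ?_
    intro A hA
    rw [hρ, Measure.finset_sum_apply]
    have hterm : ∀ s : Fin n → Bool,
        (((2:ℝ≥0∞)⁻¹)^n • Measure.dirac (fun i => Stmt9.r (s i))) (Set.univ.pi A)
        = ∏ i : Fin n, ((2:ℝ≥0∞)⁻¹ * if Stmt9.r (s i) ∈ A i then 1 else 0) := by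
      intro s
      rw [Measure.smul_apply, smul_eq_mul,
        Measure.dirac_apply' _ (MeasurableSet.univ_pi hA)]
      rw [Finset.prod_mul_distrib, Finset.prod_const, Finset.card_univ, Fintype.card_fin]
      congr 1
      rw [Finset.prod_boole]
      rw [Set.indicator_apply]
      simp only [Pi.one_apply]
      by_cases h : (fun i => Stmt9.r (s i)) ∈ Set.univ.pi A
      · rw [if_pos h, if_pos (fun i _ => h i (Set.mem_univ i))]
      · rw [if_neg h, if_neg]
        intro hall
        exact h fun i _ => hall i (Finset.mem_univ i)
    rw [Finset.sum_congr rfl (fun s _ => hterm s)]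
    rw [← Fintype.piFinset_univ, ← Finset.prod_univ_sum (fun _ => (Finset.univ : Finset Bool))
      (fun i b => (2:ℝ≥0∞)⁻¹ * if Stmt9.r b ∈ A i then 1 else 0)]
    refine Finset.prod_congr rfl fun i _ => ?_
    rw [Fintype.sum_bool]
    rw [hν]
    rw [Measure.add_apply, Measure.smul_apply, Measure.smul_apply, smul_eq_mul, smul_eq_mul,
      Measure.dirac_apply' _ (hA i), Measure.dirac_apply' _ (hA i)]
    rw [Set.indicator_apply, Set.indicator_apply]
    show (2:ℝ≥0∞)⁻¹ * (if Stmt9.r true ∈ A i then 1 else 0)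
        + (2:ℝ≥0∞)⁻¹ * (if Stmt9.r false ∈ A i then 1 else 0)
      = 2⁻¹ * (if (-1:ℝ) ∈ A i then (1:ℝ≥0∞) else 0) + 2⁻¹ * (if (1:ℝ) ∈ A i then (1:ℝ≥0∞) else 0)
    have ht : Stmt9.r true = (1:ℝ) := rfl
    have hf : Stmt9.r false = (-1:ℝ) := rfl
    rw [ht, hf, add_comm]
  -- evaluate
  rw [hpre, ← Measure.map_apply hΦmeas hsetmeas, hmap, hpi]
  have heval : ρ {x | G x ≤ 0}
      = ((Finset.univ.filter (fun s : Fin n → Bool => Stmt9.F w s ≤ 0)).card : ℝ≥0∞)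
        * ((2:ℝ≥0∞)⁻¹)^n := by
    rw [hρ, Measure.finset_sum_apply]
    have hterm : ∀ s : Fin n → Bool,
        (((2:ℝ≥0∞)⁻¹)^n • Measure.dirac (fun i => Stmt9.r (s i))) {x | G x ≤ 0}
        = if Stmt9.F w s ≤ 0 then ((2:ℝ≥0∞)⁻¹)^n else 0 := by
      intro s
      rw [Measure.smul_apply, smul_eq_mul, Measure.dirac_apply' _ hsetmeas,
        Set.indicator_apply]
      simp only [Pi.one_apply]
      have hmem : ((fun i => Stmt9.r (s i)) ∈ {x : Fin n → ℝ | G x ≤ 0}) ↔ (Stmt9.F w s ≤ 0) := by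
        rw [Set.mem_setOf_eq, hG, Stmt9.F_eq]
      by_cases h : Stmt9.F w s ≤ 0
      · rw [if_pos (hmem.2 h), if_pos h, mul_one]
      · rw [if_neg (fun hc => h (hmem.1 hc)), if_neg h, mul_zero]
    rw [Finset.sum_congr rfl (fun s _ => hterm s)]
    rw [← Finset.sum_filter, Finset.sum_const, nsmul_eq_mul]
  rw [heval]
  -- to real numbers
  have hNkey := Stmt9.count_key w ?_
  swap
  · obtain ⟨i, j, hij, hne⟩ := hw
    exact ⟨(i, j), Stmt9.mem_P.2 hij, hne⟩
  set N : ℕ := (Finset.univ.filter (fun s : Fin n → Bool => Stmt9.F w s ≤ 0)).card with hNdef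
  have htoReal : (((N : ℝ≥0∞)) * ((2:ℝ≥0∞)⁻¹)^n).toReal = (N : ℝ) * ((2:ℝ)⁻¹)^n := by
    rw [ENNReal.toReal_mul, ENNReal.toReal_pow]
    norm_num
  rw [htoReal]
  have hpow : (0:ℝ) < 2^n := by positivity
  have hfrac : (1:ℝ)/87 < (N:ℝ) / 2^n := by
    rw [div_lt_div_iff₀ (by norm_num) hpow]
    nlinarith [hNkey]
  calc (1:ℝ)/87 < (N:ℝ) / 2^n := hfrac
    _ = (N:ℝ) * ((2:ℝ)⁻¹)^n := by rw [div_eq_mul_inv, inv_pow]
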